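/- For every integer k ≥ 1 there exists a polynomial p of degree at most k such that ∫_{−1}^{1} (ReLU(z) − p(z))·z^t dz = 0 for every integer 0 ≤ t ≤ k (equivalently, ReLU − p is orthogonal in L²([−1,1], Lebesgue) to every polynomial of degree at most k), and |p(z)| ≤ 2k² for all z ∈ [−1, 1]. -/

import Mathlib

open MeasureTheory intervalIntegral Polynomial

noncomputable def Qp (n : ℕ) : Polynomial ℝ := (X ^ 2 - 1) ^ n

noncomputable def Sp (n : ℕ) : ℕ → Polynomial ℝ
  | 0 => 1
  | (j+1) => C (2 * ((n : ℝ) - j)) * X * Sp n j + (X ^ 2 - 1) * derivative (Sp n j)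

lemma Qp_struct (n : ℕ) : ∀ j, j ≤ n →
    derivative^[j] (Qp n) = (X ^ 2 - 1) ^ (n - j) * Sp n j := by
  intro j
  induction j with
  | zero => intro _; simp [Qp, Sp]
  | succ j ih =>
    intro hj
    have hjn : j < n := hj
    set m := n - (j + 1) with hmdef
    have hm : n - j = m + 1 := by omega
    have hc : ((n : ℝ) - j) = (m : ℝ) + 1 := by
      have : (n : ℕ) = m + 1 + j := by omega
      rw [this]; push_cast; ring
    rw [Function.iterate_succ_apply', ih hjn.le, hm, Sp, hc]
    rw [derivative_mul, derivative_pow]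
    simp only [derivative_sub, derivative_one, derivative_X_pow, Nat.cast_ofNat,
      Nat.cast_add, Nat.cast_one, Nat.add_sub_cancel, map_add, map_mul, map_ofNat, C_1, sub_zero]
    ring

noncomputable def Rp (n : ℕ) : Polynomial ℝ := derivative^[n] (Qp n)

lemma Rp_eq_Sp (n : ℕ) : Rp n = Sp n n := by
  have := Qp_struct n n le_rfl
  simpa [Rp] using this

lemma Sp_eval_one (n : ℕ) : ∀ j, j ≤ n → (Sp n j).eval 1 = 2 ^ j * (n.descFactorial j : ℝ) := by
  intro j
  induction j with
  | zero => intro _; simp [Sp]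
  | succ j ih =>
    intro hj
    rw [Sp, Nat.descFactorial_succ]
    simp only [eval_add, eval_mul, eval_C, eval_X, eval_sub, eval_pow, eval_one,
      ih (by omega : j ≤ n)]
    rw [Nat.cast_mul, Nat.cast_sub (by omega : j ≤ n)]
    ring

lemma Sp_eval_neg_one (n : ℕ) : ∀ j, j ≤ n →
    (Sp n j).eval (-1) = (-2) ^ j * (n.descFactorial j : ℝ) := by
  intro j
  induction j with
  | zero => intro _; simp [Sp]
  | succ j ih =>
    intro hj
    rw [Sp, Nat.descFactorial_succ]
    simp only [eval_add, eval_mul, eval_C, eval_X, eval_sub, eval_pow, eval_one,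
      ih (by omega : j ≤ n)]
    rw [Nat.cast_mul, Nat.cast_sub (by omega : j ≤ n)]
    ring

lemma Rp_eval_one (n : ℕ) : (Rp n).eval 1 = 2 ^ n * (n.factorial : ℝ) := by
  rw [Rp_eq_Sp, Sp_eval_one n n le_rfl, Nat.descFactorial_self]

lemma Rp_eval_neg_one (n : ℕ) : (Rp n).eval (-1) = (-2) ^ n * (n.factorial : ℝ) := by
  rw [Rp_eq_Sp, Sp_eval_neg_one n n le_rfl, Nat.descFactorial_self]

lemma iterate_deriv_Qp_eval_one {n j : ℕ} (hj : j < n) :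
    (derivative^[j] (Qp n)).eval 1 = 0 := by
  rw [Qp_struct n j hj.le]
  obtain ⟨m, hm⟩ : ∃ m, n - j = m + 1 := ⟨n - j - 1, by omega⟩
  rw [hm]
  simp [pow_succ]

lemma iterate_deriv_Qp_eval_neg_one {n j : ℕ} (hj : j < n) :
    (derivative^[j] (Qp n)).eval (-1) = 0 := by
  rw [Qp_struct n j hj.le]
  obtain ⟨m, hm⟩ : ∃ m, n - j = m + 1 := ⟨n - j - 1, by omega⟩
  rw [hm]
  simp [pow_succ]

lemma ode_aux (n : ℕ) (hn : 1 ≤ n) : ∀ m : ℕ,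
    (X ^ 2 - 1) * derivative^[m+1] (Qp n) =
      (2 * (n : Polynomial ℝ) - 2 * (m : Polynomial ℝ)) * X * derivative^[m] (Qp n) +
      ((m : Polynomial ℝ) * (2 * (n : Polynomial ℝ) - (m : Polynomial ℝ) + 1)) *
        derivative^[m-1] (Qp n) := by
  have base : (X ^ 2 - 1) * derivative (Qp n) = 2 * (n : Polynomial ℝ) * X * Qp n := by
    obtain ⟨n', rfl⟩ : ∃ n', n = n' + 1 := ⟨n - 1, by omega⟩
    rw [Qp, derivative_pow]
    simp only [derivative_sub, derivative_one, derivative_X_pow, Nat.cast_ofNat, sub_zero,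
      Nat.add_sub_cancel, C_eq_natCast, map_ofNat]
    push_cast
    ring
  intro m
  induction m with
  | zero =>
    simpa using base
  | succ m ih =>
    have h := congrArg derivative ih
    simp only [derivative_add, derivative_mul, derivative_sub, derivative_one,
      derivative_X_pow, derivative_X, derivative_natCast, derivative_ofNat, Nat.cast_ofNat,
      map_ofNat, pow_one, sub_zero, zero_mul, mul_one, add_zero, zero_add, mul_zero,
      ← Function.iterate_succ_apply'] at h
    rcases Nat.eq_zero_or_pos m with rfl | hm
    · simp only [Nat.zero_sub, Nat.cast_zero, zero_mul, add_zero, zero_add,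
        Nat.zero_add, mul_zero] at h ⊢
      push_cast at h ⊢
      linear_combination h
    · obtain ⟨m', rfl⟩ : ∃ m', m = m' + 1 := ⟨m - 1, by omega⟩
      simp only [Nat.add_sub_cancel] at h ⊢
      push_cast at h ⊢
      linear_combination h

lemma ode_eval (n : ℕ) (hn : 1 ≤ n) (x : ℝ) :
    (1 - x^2) * (derivative (derivative (Rp n))).eval x
      = 2*x*((derivative (Rp n)).eval x) - (n:ℝ)*((n:ℝ)+1)*((Rp n).eval x) := by
  have h := ode_aux n hn (n+1)
  simp only [Nat.add_sub_cancel] at h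
  have h1 : derivative (Rp n) = derivative^[n+1] (Qp n) := by
    rw [Rp]; exact (Function.iterate_succ_apply' _ n _).symm
  have h2 : derivative (derivative (Rp n)) = derivative^[n+1+1] (Qp n) := by
    rw [h1]; exact (Function.iterate_succ_apply' _ (n+1) _).symm
  rw [h2, h1, Rp]
  have h3 := congrArg (eval x) h
  simp only [eval_mul, eval_add, eval_sub, eval_pow, eval_one, eval_X, eval_natCast,
    eval_ofNat] at h3
  push_cast at h3 ⊢
  linear_combination -h3

lemma Rp_bound (n : ℕ) {x : ℝ} (hx : x ∈ Set.Icc (-1:ℝ) 1) :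
    |(Rp n).eval x| ≤ 2^n * n.factorial := by
  rcases Nat.eq_zero_or_pos n with rfl | hn
  · simp [Rp, Qp]
  set N : ℝ := (n:ℝ) * ((n:ℝ)+1) with hNdef
  have hN : 0 < N := by positivity
  set R := Rp n
  set g : ℝ → ℝ := fun y =>
    (R.eval y)^2 + (1 - y^2) * ((derivative R).eval y)^2 / N with hgdef
  have hg' : ∀ y : ℝ, HasDerivAt g (2*y*((derivative R).eval y)^2/N) y := by
    intro y
    have hR : HasDerivAt (fun z => R.eval z) ((derivative R).eval y) y :=
      Polynomial.hasDerivAt _ y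
    have hR' : HasDerivAt (fun z => (derivative R).eval z)
        ((derivative (derivative R)).eval y) y := Polynomial.hasDerivAt _ y
    have h2 : HasDerivAt (fun z : ℝ => 1 - z^2) (-(2*y)) y := by
      simpa using (hasDerivAt_pow 2 y).const_sub 1
    have h := (hR.pow 2).add (((h2.mul (hR'.pow 2))).div_const N)
    convert h using 1
    · rfl
    · rfl
    · rfl
    have hode := ode_eval n hn y
    simp only [Pi.pow_apply]
    field_simp
    linear_combination (-2 * (derivative R).eval y) * hode
  have hgc : Continuous g := by
    apply Continuous.add
    · exact (Polynomial.continuous R).pow 2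
    · exact (((continuous_const.sub (continuous_pow 2)).mul
        ((Polynomial.continuous (derivative R)).pow 2)).div_const N)
  have hderiv : ∀ y : ℝ, deriv g y = 2*y*((derivative R).eval y)^2/N :=
    fun y => (hg' y).deriv
  have mono : MonotoneOn g (Set.Icc 0 1) := by
    apply monotoneOn_of_deriv_nonneg (convex_Icc 0 1) hgc.continuousOn
      (fun y _ => ((hg' y).differentiableAt).differentiableWithinAt)
    intro y hy
    rw [interior_Icc] at hy
    rw [hderiv]
    have : (0:ℝ) ≤ y := hy.1.le
    positivity
  have anti : AntitoneOn g (Set.Icc (-1) 0) := by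
    apply antitoneOn_of_deriv_nonpos (convex_Icc (-1) 0) hgc.continuousOn
      (fun y _ => ((hg' y).differentiableAt).differentiableWithinAt)
    intro y hy
    rw [interior_Icc] at hy
    rw [hderiv]
    have hy0 : y ≤ 0 := hy.2.le
    have : 2*y*((derivative R).eval y)^2 ≤ 0 := by
      apply mul_nonpos_of_nonpos_of_nonneg
      · linarith
      · positivity
    exact div_nonpos_of_nonpos_of_nonneg this hN.le
  have hg1 : g 1 = (2^n * n.factorial : ℝ)^2 := by
    simp only [hgdef]
    rw [Rp_eval_one]
    norm_num
  have hgm1 : g (-1) = (2^n * n.factorial : ℝ)^2 := by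
    simp only [hgdef]
    rw [Rp_eval_neg_one]
    ring_nf
    rw [Even.neg_pow ⟨n, by ring⟩]
  have key : g x ≤ (2^n * n.factorial : ℝ)^2 := by
    rcases le_total 0 x with h0 | h0
    · rw [← hg1]
      exact mono ⟨h0, hx.2⟩ ⟨zero_le_one, le_refl 1⟩ hx.2
    · rw [← hgm1]
      exact anti ⟨le_refl (-1), neg_nonpos.mpr zero_le_one⟩ ⟨hx.1, h0⟩ hx.1
  have hsq : (R.eval x)^2 ≤ (2^n * n.factorial : ℝ)^2 := by
    have h1 : 0 ≤ (1 - x^2) * ((derivative R).eval x)^2 / N := by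
      have hx2 : x^2 ≤ 1 := by nlinarith [hx.1, hx.2]
      have h2 : (0:ℝ) ≤ 1 - x^2 := by linarith
      positivity
    calc (R.eval x)^2 ≤ g x := by simp only [hgdef]; linarith
    _ ≤ _ := key
  have hM : (0:ℝ) ≤ 2^n * n.factorial := by positivity
  calc |R.eval x| = Real.sqrt ((R.eval x)^2) := (Real.sqrt_sq_eq_abs _).symm
  _ ≤ Real.sqrt ((2^n * n.factorial : ℝ)^2) := Real.sqrt_le_sqrt hsq
  _ = 2^n * n.factorial := Real.sqrt_sq hM

lemma poly_ii (p : Polynomial ℝ) (a b : ℝ) :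
    IntervalIntegrable (fun x => p.eval x) volume a b :=
  (p.continuous_aeval).intervalIntegrable a b

lemma ibp (n : ℕ) : ∀ m, m ≤ n → ∀ v : Polynomial ℝ,
    ∫ x in (-1:ℝ)..1, (derivative^[m] (Qp n)).eval x * v.eval x
      = (-1:ℝ)^m * ∫ x in (-1:ℝ)..1, (Qp n).eval x * (derivative^[m] v).eval x := by
  intro m
  induction m with
  | zero => intro _ v; simp
  | succ m ih =>
    intro hm v
    have hmn : m < n := hm
    have hu : ∀ x ∈ Set.uIcc (-1:ℝ) 1, HasDerivAt (fun y => (derivative^[m] (Qp n)).eval y)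
        ((derivative^[m+1] (Qp n)).eval x) x := by
      intro x _
      have h := Polynomial.hasDerivAt (derivative^[m] (Qp n)) x
      have he : derivative (derivative^[m] (Qp n)) = derivative^[m+1] (Qp n) :=
        (Function.iterate_succ_apply' _ m _).symm
      rwa [he] at h
    have hv : ∀ x ∈ Set.uIcc (-1:ℝ) 1, HasDerivAt (fun y => v.eval y)
        ((derivative v).eval x) x := fun x _ => Polynomial.hasDerivAt v x
    have key := intervalIntegral.integral_deriv_mul_eq_sub hu hv
      (poly_ii _ _ _) (poly_ii _ _ _)
    rw [iterate_deriv_Qp_eval_one hmn, iterate_deriv_Qp_eval_neg_one hmn] at key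
    simp only [zero_mul, sub_zero, mul_zero, sub_self] at key
    have hsplit : (∫ x in (-1:ℝ)..1, ((derivative^[m+1] (Qp n)).eval x * v.eval x
          + (derivative^[m] (Qp n)).eval x * (derivative v).eval x))
        = (∫ x in (-1:ℝ)..1, (derivative^[m+1] (Qp n)).eval x * v.eval x)
          + ∫ x in (-1:ℝ)..1, (derivative^[m] (Qp n)).eval x * (derivative v).eval x := by
      apply intervalIntegral.integral_add
      · exact ((poly_ii _ _ _).mul_continuousOn (Polynomial.continuous v).continuousOn)
      · exact ((poly_ii _ _ _).mul_continuousOn (Polynomial.continuous _).continuousOn)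
    rw [hsplit] at key
    have h2 : (∫ x in (-1:ℝ)..1, (derivative^[m+1] (Qp n)).eval x * v.eval x)
        = - ∫ x in (-1:ℝ)..1, (derivative^[m] (Qp n)).eval x * (derivative v).eval x := by
      linarith
    rw [h2, ih hmn.le (derivative v)]
    rw [← Function.iterate_succ_apply]
    ring

lemma orth (n : ℕ) (v : Polynomial ℝ) (hv : v.natDegree < n) :
    ∫ x in (-1:ℝ)..1, (Rp n).eval x * v.eval x = 0 := by
  rw [Rp, ibp n n le_rfl v, Polynomial.iterate_derivative_eq_zero hv]
  simp

lemma Qp_monic (n : ℕ) : (Qp n).Monic := by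
  have h1 : (X ^ 2 - 1 : Polynomial ℝ).Monic := by
    have := monic_X_pow_sub_C (1:ℝ) (two_ne_zero)
    simpa using this
  exact h1.pow n

lemma Qp_natDegree (n : ℕ) : (Qp n).natDegree = 2 * n := by
  rw [Qp, natDegree_pow]
  have : (X ^ 2 - 1 : Polynomial ℝ).natDegree = 2 := by
    have := natDegree_X_pow_sub_C (n := 2) (r := (1:ℝ))
    simpa using this
  rw [this, mul_comm]

lemma iterate_derivative_Rp (n : ℕ) :
    derivative^[n] (Rp n) = Polynomial.C (((2*n).factorial : ℝ)) := by
  rw [Rp, ← Function.iterate_add_apply]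
  have hdeg : (derivative^[n + n] (Qp n)).natDegree ≤ 0 := by
    refine (Polynomial.natDegree_iterate_derivative _ _).trans ?_
    rw [Qp_natDegree]; omega
  rw [Polynomial.eq_C_of_natDegree_le_zero hdeg]
  congr 1
  rw [Polynomial.coeff_iterate_derivative]
  have hc : (Qp n).coeff (2*n) = 1 := by
    have := (Qp_monic n).coeff_natDegree
    rwa [Qp_natDegree] at this
  have e1 : 0 + (n + n) = 2 * n := by omega
  rw [e1, hc, ← two_mul, Nat.descFactorial_self]
  simp

lemma Rp_normsq (n : ℕ) : ∫ x in (-1:ℝ)..1, ((Rp n).eval x)^2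
    = ((2*n).factorial : ℝ) * ∫ x in (-1:ℝ)..1, (1 - x^2)^n := by
  have h1 : ∫ x in (-1:ℝ)..1, ((Rp n).eval x)^2
      = ∫ x in (-1:ℝ)..1, (derivative^[n] (Qp n)).eval x * (Rp n).eval x := by
    apply intervalIntegral.integral_congr
    intro x _
    rw [← Rp]; ring
  rw [h1, ibp n n le_rfl (Rp n), iterate_derivative_Rp]
  rw [← intervalIntegral.integral_const_mul]
  rw [← intervalIntegral.integral_const_mul]
  apply intervalIntegral.integral_congr
  intro x _
  simp only [eval_C, Qp, eval_pow, eval_sub, eval_one, eval_X]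
  rw [show ((1:ℝ) - x^2)^n = (-1)^n * (x^2-1)^n by rw [← neg_pow]; ring_nf]
  ring

lemma wallis_lb (n : ℕ) (hn : 1 ≤ n) :
    1 / Real.sqrt n ≤ ∫ x in (-1:ℝ)..1, (1 - x^2)^n := by
  set s : ℝ := 1 / Real.sqrt n with hs
  have hsqrt : 1 ≤ Real.sqrt n := by
    rw [show (1:ℝ) = Real.sqrt 1 by simp]
    apply Real.sqrt_le_sqrt
    exact_mod_cast hn
  have hs0 : 0 < s := by positivity
  have hs1 : s ≤ 1 := by
    rw [hs, div_le_one (by positivity)]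
    exact hsqrt
  have hns2 : (n:ℝ) * s^2 = 1 := by
    rw [hs]
    field_simp
    rw [Real.sq_sqrt (Nat.cast_nonneg _)]
  have hcont : Continuous (fun x : ℝ => (1 - x^2)^n) := by continuity
  have step1 : ∫ x in (-s)..s, (1 - (n:ℝ)*x^2) ≤ ∫ x in (-s)..s, (1 - x^2)^n := by
    apply intervalIntegral.integral_mono_on (by linarith)
    · exact (Continuous.intervalIntegrable (by continuity) _ _)
    · exact hcont.intervalIntegrable _ _
    · intro x hx
      have hx2 : x^2 ≤ s^2 := sq_le_sq' hx.1 hx.2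
      have h2 : -2 ≤ -(x^2) := by nlinarith
      have := one_add_mul_le_pow h2 n
      calc 1 - (n:ℝ)*x^2 = 1 + n * (-(x^2)) := by ring
      _ ≤ (1 + (-(x^2)))^n := this
      _ = (1 - x^2)^n := by ring_nf
  have step2 : ∫ x in (-s)..s, (1 - x^2)^n ≤ ∫ x in (-1:ℝ)..1, (1 - x^2)^n := by
    apply intervalIntegral.integral_mono_interval (by linarith) (by linarith) hs1
    · filter_upwards [MeasureTheory.ae_restrict_mem measurableSet_Ioc] with x hx
      have h1 : x^2 ≤ 1 := by
        rcases hx with ⟨h1, h2⟩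
        nlinarith
      simp only [Pi.zero_apply]
      have h2 : (0:ℝ) ≤ 1 - x^2 := by linarith
      exact pow_nonneg h2 n
    · exact hcont.intervalIntegrable _ _
  have step0 : ∫ x in (-s)..s, (1 - (n:ℝ)*x^2) = 2*s - (n:ℝ)*(2*s^3/3) := by
    rw [intervalIntegral.integral_sub (Continuous.intervalIntegrable (by continuity) _ _)
      (Continuous.intervalIntegrable (by continuity) _ _)]
    rw [intervalIntegral.integral_const_mul, integral_pow]
    simp
    ring
  have : 1/Real.sqrt n ≤ 2*s - (n:ℝ)*(2*s^3/3) := by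
    rw [← hs]
    have : (n:ℝ)*(2*s^3/3) = (2*s/3) * ((n:ℝ)*s^2) := by ring
    rw [this, hns2]
    linarith
  linarith

lemma normsq_pos (n : ℕ) : 0 < ∫ x in (-1:ℝ)..1, ((Rp n).eval x)^2 := by
  rcases Nat.eq_zero_or_pos n with rfl | hn
  · have : (Rp 0) = 1 := by simp [Rp, Qp]
    rw [this]
    simp
  · rw [Rp_normsq]
    have h1 := wallis_lb n hn
    have h2 : (0:ℝ) < 1 / Real.sqrt n := by positivity
    have h3 : (0:ℝ) < ((2*n).factorial : ℝ) := by positivity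
    nlinarith

lemma cs_ineq (p : Polynomial ℝ) (hCpos : 0 < ∫ x in (-1:ℝ)..1, (p.eval x)^2) :
    (∫ x in (-1:ℝ)..1, (max x 0) * p.eval x)^2
      ≤ (∫ x in (-1:ℝ)..1, (max x 0)^2) * ∫ x in (-1:ℝ)..1, (p.eval x)^2 := by
  set A := ∫ x in (-1:ℝ)..1, (max x 0)^2 with hA
  set B := ∫ x in (-1:ℝ)..1, (max x 0) * p.eval x with hB
  set C := ∫ x in (-1:ℝ)..1, (p.eval x)^2 with hC
  have hF : Continuous (fun x : ℝ => max x 0) := continuous_id.max continuous_const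
  have hP : Continuous (fun x : ℝ => p.eval x) := p.continuous_aeval
  have hexp : ∫ x in (-1:ℝ)..1, (C * max x 0 - B * p.eval x)^2
      = C^2 * A - 2*C*B*B + B^2*C := by
    have : ∀ x : ℝ, (C * max x 0 - B * p.eval x)^2
        = C^2 * (max x 0)^2 - 2*C*B*((max x 0) * p.eval x) + B^2 * (p.eval x)^2 := by
      intro x; ring
    rw [intervalIntegral.integral_congr (fun x _ => this x)]
    rw [intervalIntegral.integral_add, intervalIntegral.integral_sub,
      intervalIntegral.integral_const_mul, intervalIntegral.integral_const_mul,
      intervalIntegral.integral_const_mul]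
    · exact (Continuous.intervalIntegrable (by continuity) _ _)
    · exact (Continuous.intervalIntegrable (by continuity) _ _)
    · exact (Continuous.intervalIntegrable (by continuity) _ _)
    · exact (Continuous.intervalIntegrable (by continuity) _ _)
  have hnn : 0 ≤ ∫ x in (-1:ℝ)..1, (C * max x 0 - B * p.eval x)^2 :=
    intervalIntegral.integral_nonneg (by norm_num) (fun x _ => sq_nonneg _)
  rw [hexp] at hnn
  nlinarith [hCpos, hnn]

lemma A_val : (∫ x in (-1:ℝ)..1, (max x 0)^2) = 1/3 := by
  have hcont : Continuous (fun x : ℝ => (max x 0)^2) := by continuity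
  have hsplit := intervalIntegral.integral_add_adjacent_intervals
    (a := (-1:ℝ)) (b := 0) (c := 1) (μ := volume) (f := fun x => (max x 0)^2)
    (hcont.intervalIntegrable _ _) (hcont.intervalIntegrable _ _)
  rw [← hsplit]
  have h1 : (∫ x in (-1:ℝ)..0, (max x 0)^2) = 0 := by
    have : ∀ x ∈ Set.uIcc (-1:ℝ) 0, (max x 0)^2 = 0 := by
      intro x hx
      rw [Set.uIcc_of_le (by norm_num)] at hx
      rw [max_eq_right hx.2]
      simp
    rw [intervalIntegral.integral_congr this]
    simp
  have h2 : (∫ x in (0:ℝ)..1, (max x 0)^2) = 1/3 := by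
    have : ∀ x ∈ Set.uIcc (0:ℝ) 1, (max x 0)^2 = x^2 := by
      intro x hx
      rw [Set.uIcc_of_le (by norm_num)] at hx
      rw [max_eq_left hx.1]
    rw [intervalIntegral.integral_congr this, integral_pow]
    norm_num
  rw [h1, h2]
  norm_num

lemma Rp_natDegree_le (n : ℕ) : (Rp n).natDegree ≤ n := by
  refine (Polynomial.natDegree_iterate_derivative _ _).trans ?_
  rw [Qp_natDegree]; omega

lemma Rp_coeff_ne (n : ℕ) : (Rp n).coeff n ≠ 0 := by
  rw [Rp, Polynomial.coeff_iterate_derivative]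
  have hc : (Qp n).coeff (n + n) = 1 := by
    have := (Qp_monic n).coeff_natDegree
    rwa [Qp_natDegree, two_mul] at this
  rw [hc]
  simp only [nsmul_eq_mul, mul_one]
  have : 0 < (n + n).descFactorial n :=
    Nat.pos_of_ne_zero (fun h => by have := Nat.descFactorial_eq_zero_iff_lt.mp h; omega)
  positivity

lemma Rp_zero : Rp 0 = 1 := rfl

lemma normsq_lb (n : ℕ) (hn : 1 ≤ n) :
    ((2*n).factorial : ℝ) * (1 / Real.sqrt n) ≤ ∫ x in (-1:ℝ)..1, ((Rp n).eval x)^2 := by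
  rw [Rp_normsq]
  have h := wallis_lb n hn
  have : (0:ℝ) ≤ ((2*n).factorial : ℝ) := by positivity
  exact mul_le_mul_of_nonneg_left h this

lemma Mn_sq (n : ℕ) : ((2:ℝ)^n * n.factorial)^2 ≤ (2*(n:ℝ)+1) * ((2*n).factorial : ℝ) := by
  have h1 := Nat.four_pow_le_two_mul_add_one_mul_central_binom n
  have h2 : (2*n).choose n * (n.factorial * n.factorial) = (2*n).factorial := by
    have := Nat.choose_mul_factorial_mul_factorial (show n ≤ 2*n by omega)
    have he : 2*n - n = n := by omega
    rw [he] at this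
    linarith [this]
  have : 4^n * (n.factorial * n.factorial) ≤ (2*n+1) * (2*n).factorial := by
    calc 4^n * (n.factorial * n.factorial)
        ≤ ((2*n+1) * (2*n).choose n) * (n.factorial * n.factorial) :=
          Nat.mul_le_mul_right _ h1
    _ = (2*n+1) * ((2*n).choose n * (n.factorial * n.factorial)) := by ring
    _ = (2*n+1) * (2*n).factorial := by rw [h2]
  have hr : ((4:ℝ)^n * (n.factorial * n.factorial) : ℝ) ≤ (2*(n:ℝ)+1) * ((2*n).factorial : ℝ) := by
    exact_mod_cast this
  calc ((2:ℝ)^n * n.factorial)^2 = (4:ℝ)^n * (n.factorial * n.factorial) := by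
        rw [mul_pow, ← pow_mul, mul_comm n 2, pow_mul]
        norm_num
        ring
  _ ≤ _ := hr

noncomputable def Bc (n : ℕ) : ℝ := ∫ x in (-1:ℝ)..1, (max x 0) * (Rp n).eval x
noncomputable def Cc (n : ℕ) : ℝ := ∫ x in (-1:ℝ)..1, ((Rp n).eval x)^2
noncomputable def cc (n : ℕ) : ℝ := Bc n / Cc n
noncomputable def pp (k : ℕ) : Polynomial ℝ :=
  ∑ n ∈ Finset.range (k+1), Polynomial.C (cc n) * Rp n

lemma pp_eval (k : ℕ) (x : ℝ) :
    (pp k).eval x = ∑ n ∈ Finset.range (k+1), cc n * (Rp n).eval x := by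
  rw [pp, Polynomial.eval_finset_sum]
  exact Finset.sum_congr rfl (fun n _ => by simp)

lemma pp_degree (k : ℕ) : (pp k).degree ≤ k := by
  refine (Polynomial.degree_sum_le _ _).trans ?_
  refine Finset.sup_le fun n hn => ?_
  calc (Polynomial.C (cc n) * Rp n).degree ≤ (Polynomial.C (cc n)).degree + (Rp n).degree :=
        Polynomial.degree_mul_le _ _
  _ ≤ 0 + (Rp n).degree := add_le_add_left Polynomial.degree_C_le _
  _ = (Rp n).degree := zero_add _
  _ ≤ ((Rp n).natDegree : WithBot ℕ) := Polynomial.degree_le_natDegree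
  _ ≤ (k : WithBot ℕ) := by
      have h1 : (Rp n).natDegree ≤ k := (Rp_natDegree_le n).trans (by
        have := Finset.mem_range.mp hn; omega)
      exact_mod_cast h1

lemma horth (m n : ℕ) (hmn : m ≠ n) :
    ∫ x in (-1:ℝ)..1, (Rp n).eval x * (Rp m).eval x = 0 := by
  rcases lt_or_gt_of_ne hmn with h | h
  · exact orth n (Rp m) (lt_of_le_of_lt (Rp_natDegree_le m) h)
  · rw [intervalIntegral.integral_congr (g := fun x => (Rp m).eval x * (Rp n).eval x)
      (fun x _ => mul_comm _ _)]
    exact orth m (Rp n) (lt_of_le_of_lt (Rp_natDegree_le n) h)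

lemma mom_R (k m : ℕ) (hm : m ≤ k) :
    ∫ x in (-1:ℝ)..1, (max x 0 - (pp k).eval x) * (Rp m).eval x = 0 := by
  have hFc : Continuous (fun x : ℝ => max x 0) := continuous_id.max continuous_const
  have hsub : ∫ x in (-1:ℝ)..1, (max x 0 - (pp k).eval x) * (Rp m).eval x
      = (∫ x in (-1:ℝ)..1, (max x 0) * (Rp m).eval x)
        - ∫ x in (-1:ℝ)..1, (pp k).eval x * (Rp m).eval x := by
    rw [← intervalIntegral.integral_sub (f := fun x => max x 0 * (Rp m).eval x)
      (g := fun x => (pp k).eval x * (Rp m).eval x)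
      ((hFc.mul (Polynomial.continuous (Rp m))).intervalIntegrable _ _)
      (((Polynomial.continuous (pp k)).mul (Polynomial.continuous (Rp m))).intervalIntegrable _ _)]
    apply intervalIntegral.integral_congr; intro x _; ring
  have hps : ∫ x in (-1:ℝ)..1, (pp k).eval x * (Rp m).eval x = Bc m := by
    have h1 : ∀ x : ℝ, (pp k).eval x * (Rp m).eval x
        = ∑ n ∈ Finset.range (k+1), cc n * ((Rp n).eval x * (Rp m).eval x) := by
      intro x; rw [pp_eval k x, Finset.sum_mul]
      exact Finset.sum_congr rfl (fun n _ => by ring)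
    rw [intervalIntegral.integral_congr (fun x _ => h1 x)]
    rw [intervalIntegral.integral_finset_sum (fun n _ =>
      (Continuous.intervalIntegrable (by
        exact continuous_const.mul ((Polynomial.continuous (Rp n)).mul (Polynomial.continuous (Rp m)))) _ _))]
    rw [Finset.sum_eq_single m]
    · rw [intervalIntegral.integral_const_mul]
      have h2 : (∫ x in (-1:ℝ)..1, (Rp m).eval x * (Rp m).eval x) = Cc m := by
        rw [Cc]
        apply intervalIntegral.integral_congr; intro x _; ring
      have hCne : Cc m ≠ 0 := (normsq_pos m).ne'
      rw [h2, cc, div_mul_cancel₀ _ hCne]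
    · intro n _ hne
      rw [intervalIntegral.integral_const_mul, horth m n (fun h => hne h.symm), mul_zero]
    · intro hmem
      exact absurd (Finset.mem_range.mpr (by omega)) hmem
  rw [hsub, hps, Bc, sub_self]

lemma mom_poly (k : ℕ) : ∀ d, d ≤ k → ∀ v : Polynomial ℝ, v.natDegree ≤ d →
    ∫ x in (-1:ℝ)..1, (max x 0 - (pp k).eval x) * v.eval x = 0 := by
  intro d
  induction d using Nat.strong_induction_on with
  | _ d ih =>
    intro hd v hv
    set a : ℝ := v.coeff d / (Rp d).coeff d with ha
    set w : Polynomial ℝ := v - Polynomial.C a * Rp d with hw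
    have hwc : w.coeff d = 0 := by
      rw [hw, Polynomial.coeff_sub, Polynomial.coeff_C_mul, ha,
        div_mul_cancel₀ _ (Rp_coeff_ne d), sub_self]
    have hwd : w.natDegree ≤ d := by
      rw [hw]
      refine (Polynomial.natDegree_sub_le _ _).trans ?_
      refine max_le hv ?_
      refine (Polynomial.natDegree_C_mul_le _ _).trans (Rp_natDegree_le d)
    have hw0 : ∫ x in (-1:ℝ)..1, (max x 0 - (pp k).eval x) * w.eval x = 0 := by
      rcases Nat.eq_zero_or_pos d with rfl | hdpos
      · have : w = 0 := by
          have := Polynomial.eq_C_of_natDegree_le_zero hwd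
          rw [this, hwc, map_zero]
        rw [this]
        simp
      · obtain ⟨e, rfl⟩ : ∃ e, d = e + 1 := ⟨d - 1, by omega⟩
        apply ih e (by omega) (by omega)
        rw [Polynomial.natDegree_le_iff_coeff_eq_zero]
        intro m hm
        rcases eq_or_lt_of_le (Nat.succ_le_of_lt hm) with h | h
        · rw [← h]; exact hwc
        · exact Polynomial.coeff_eq_zero_of_natDegree_lt (lt_of_le_of_lt hwd h)
    have hdecomp : ∀ x : ℝ, (max x 0 - (pp k).eval x) * v.eval x
        = (max x 0 - (pp k).eval x) * w.eval x
          + a * ((max x 0 - (pp k).eval x) * (Rp d).eval x) := by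
      intro x
      rw [hw]
      simp only [Polynomial.eval_sub, Polynomial.eval_mul, Polynomial.eval_C]
      ring
    rw [intervalIntegral.integral_congr (fun x _ => hdecomp x)]
    have hFc : Continuous (fun x : ℝ => max x 0) := continuous_id.max continuous_const
    rw [intervalIntegral.integral_add
      (Continuous.intervalIntegrable (by
        exact (hFc.sub (Polynomial.continuous (pp k))).mul (Polynomial.continuous w)) _ _)
      (Continuous.intervalIntegrable (by
        exact continuous_const.mul (((hFc.sub (Polynomial.continuous (pp k)))).mul
          (Polynomial.continuous (Rp d)))) _ _)]
    rw [hw0, intervalIntegral.integral_const_mul, mom_R k d hd, mul_zero, add_zero]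

lemma cc_bound (n : ℕ) {z : ℝ} (hz : z ∈ Set.Icc (-1:ℝ) 1) :
    |cc n * (Rp n).eval z| ≤ (n:ℝ) + 1/2 := by
  have hCpos : 0 < Cc n := normsq_pos n
  have hCS : (Bc n)^2 ≤ (1/3) * Cc n := by
    have h := cs_ineq (Rp n) (normsq_pos n)
    rw [A_val] at h
    exact h
  have hM := Rp_bound n hz
  set M : ℝ := 2^n * n.factorial with hMdef
  have hMpos : 0 < M := by positivity
  have hRz2 : ((Rp n).eval z)^2 ≤ M^2 := by
    rw [← sq_abs]
    exact pow_le_pow_left₀ (abs_nonneg _) hM 2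
  have key : (cc n * (Rp n).eval z)^2 ≤ M^2/(3*Cc n) := by
    have e1 : (cc n * (Rp n).eval z)^2 = (Bc n)^2 * ((Rp n).eval z)^2 / (Cc n)^2 := by
      rw [cc]; ring
    rw [e1]
    have e2 : (Bc n)^2 * ((Rp n).eval z)^2 / (Cc n)^2
        ≤ ((1/3) * Cc n) * M^2 / (Cc n)^2 := by
      gcongr
    refine e2.trans (le_of_eq ?_)
    field_simp
  have hsq : (cc n * (Rp n).eval z)^2 ≤ ((n:ℝ) + 1/2)^2 := by
    rcases Nat.eq_zero_or_pos n with rfl | hn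
    · have hC0 : Cc 0 = 2 := by
        rw [Cc, Rp_zero]
        simp
        norm_num
      have hM1 : M = 1 := by
        rw [hMdef]
        simp [Nat.factorial]
      rw [hC0, hM1] at key
      refine key.trans ?_
      norm_num
    · have hn1 : (1:ℝ) ≤ n := by exact_mod_cast hn
      set s : ℝ := Real.sqrt n with hs
      have hspos : 0 < s := by positivity
      have hsn : s ≤ n := by
        rw [hs]
        have h1 : Real.sqrt n ≤ Real.sqrt ((n:ℝ)^2) := Real.sqrt_le_sqrt (by nlinarith)
        rwa [Real.sqrt_sq (by positivity)] at h1
      have hlb := normsq_lb n hn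
      have t1 : ((2*n).factorial:ℝ) ≤ s * Cc n := by
        have hlb' : ((2*n).factorial:ℝ)/s ≤ Cc n := by
          rw [div_eq_mul_one_div]
          exact hlb
        have := (div_le_iff₀ hspos).mp hlb'
        linarith
      have hMsq := Mn_sq n
      have hgoal : M^2/(3*Cc n) ≤ (n:ℝ)^2 := by
        rw [div_le_iff₀ (by positivity)]
        calc M^2 ≤ (2*(n:ℝ)+1) * ((2*n).factorial:ℝ) := hMsq
        _ ≤ 3*(n:ℝ) * ((2*n).factorial:ℝ) := by
            have h0 : (0:ℝ) ≤ ((2*n).factorial:ℝ) := by positivity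
            nlinarith
        _ ≤ 3*(n:ℝ) * (s * Cc n) := by
            have h0 : (0:ℝ) ≤ 3*(n:ℝ) := by positivity
            exact mul_le_mul_of_nonneg_left t1 h0
        _ ≤ 3*(n:ℝ) * ((n:ℝ) * Cc n) := by gcongr
        _ = (n:ℝ)^2 * (3 * Cc n) := by ring
      refine key.trans (hgoal.trans ?_)
      nlinarith
  have hnn : (0:ℝ) ≤ (n:ℝ) + 1/2 := by positivity
  calc |cc n * (Rp n).eval z| = Real.sqrt ((cc n * (Rp n).eval z)^2) :=
        (Real.sqrt_sq_eq_abs _).symm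
  _ ≤ Real.sqrt (((n:ℝ) + 1/2)^2) := Real.sqrt_le_sqrt hsq
  _ = (n:ℝ) + 1/2 := Real.sqrt_sq hnn

lemma pp_bound (k : ℕ) (hk : 0 < k) {z : ℝ} (hz : z ∈ Set.Icc (-1:ℝ) 1) :
    |(pp k).eval z| ≤ 2 * (k:ℝ)^2 := by
  rw [pp_eval]
  calc |∑ n ∈ Finset.range (k+1), cc n * (Rp n).eval z|
      ≤ ∑ n ∈ Finset.range (k+1), |cc n * (Rp n).eval z| :=
        Finset.abs_sum_le_sum_abs _ _
  _ ≤ ∑ n ∈ Finset.range (k+1), ((n:ℝ) + 1/2) :=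
        Finset.sum_le_sum (fun n _ => cc_bound n hz)
  _ ≤ 2 * (k:ℝ)^2 := by
      rw [Finset.sum_add_distrib, Finset.sum_const, Finset.card_range]
      have hsum : (∑ n ∈ Finset.range (k+1), (n:ℝ)) = (k:ℝ)*((k:ℝ)+1)/2 := by
        have h := Finset.sum_range_id_mul_two (k+1)
        have h2 : ((∑ n ∈ Finset.range (k+1), n : ℕ) : ℝ) * 2 = ((k+1) * k : ℕ) := by
          exact_mod_cast congrArg (Nat.cast : ℕ → ℝ) h
        push_cast at h2 ⊢
        linarith
      rw [hsum, nsmul_eq_mul]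
      have hk1 : (1:ℝ) ≤ k := by exact_mod_cast hk
      push_cast
      nlinarith

/-- For every `k ≥ 1` there is a polynomial `p` of degree at most `k` such that
`ReLU - p` is orthogonal on `[-1, 1]` (Lebesgue measure) to `z^t` for all `0 ≤ t ≤ k`,
and `|p(z)| ≤ 2k²` on `[-1, 1]`. -/
theorem stmt14 (k : ℕ) (hk : 0 < k) :
    ∃ p : Polynomial ℝ, p.degree ≤ k ∧
      (∀ t : ℕ, t ≤ k → ∫ z in (-1 : ℝ)..1, (max z 0 - p.eval z) * z ^ t = 0) ∧
      ∀ z ∈ Set.Icc (-1 : ℝ) 1, |p.eval z| ≤ 2 * (k : ℝ) ^ 2 := by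
  refine ⟨pp k, pp_degree k, ?_, fun z hz => pp_bound k hk hz⟩
  intro t ht
  have h := mom_poly k k le_rfl (Polynomial.X ^ t)
    (by simpa [Polynomial.natDegree_X_pow] using ht)
  simpa using h
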